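/- For all positive integers k and m there exists a constant C = C(m, k) such that the following holds: for every red–blue colouring of ℤ containing no (2,k)-AP and every integer d ≥ 1 such that [0, d] is a gap, the number of red integers in the interval [0, m·d] is at most C. -/

import Mathlib

/-- A red–blue colouring of ℤ (red set `R`, blue its complement) contains an `(a,b)`-AP:
an arithmetic progression `x, x+d, …, x+(a+b−1)d` with `d ≠ 0` whose first `a` terms are
red and whose last `b` terms are blue. -/
def HasAPZ (R : Set ℤ) (a b : ℕ) : Prop :=
  ∃ x d : ℤ, d ≠ 0 ∧
    (∀ i : ℕ, i < a → x + (i : ℤ) * d ∈ R) ∧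
    (∀ i : ℕ, a ≤ i → i < a + b → x + (i : ℤ) * d ∉ R)

/-- `[u, v]` is a gap: `u < v`, `u` and `v` are red, and all integers strictly between
`u` and `v` are blue. -/
def IsGap (R : Set ℤ) (u v : ℤ) : Prop :=
  u < v ∧ u ∈ R ∧ v ∈ R ∧ ∀ n : ℤ, u < n → n < v → n ∉ R

theorem lemB {R : Set ℤ} {k : ℕ} (hAP : ¬ HasAPZ R 2 k) {x y : ℤ}
    (hy : y ∈ R) (hx : x ∈ R) (hxy : y < x) :
    ∃ j : ℕ, 1 ≤ j ∧ j ≤ k ∧ y - (j : ℤ) * (x - y) ∈ R := by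
  by_contra h
  push_neg at h
  apply hAP
  refine ⟨x, y - x, by omega, ?_, ?_⟩
  · intro i hi
    interval_cases i
    · simpa using hx
    · have : x + (1 : ℤ) * (y - x) = y := by ring
      rw [Nat.cast_one, this]; exact hy
  · intro i h2 hik hmem
    have hj := h (i - 1) (by omega) (by omega)
    apply hj
    have hcast : ((i - 1 : ℕ) : ℤ) = (i : ℤ) - 1 := by
      have h1 : (1:ℕ) ≤ i := by omega
      push_cast [Nat.cast_sub h1]
      ring
    have : y - ((i : ℤ) - 1) * (x - y) = x + (i : ℤ) * (y - x) := by ring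
    rw [hcast, this]
    exact hmem

open Classical in
/-- The finset of red integers in `[0, n]`. -/
noncomputable def redF (R : Set ℤ) (n : ℕ) : Finset ℤ :=
  (Finset.Icc (0:ℤ) (n:ℤ)).filter (fun x => x ∈ R)

theorem mem_redF {R : Set ℤ} {n : ℕ} {x : ℤ} :
    x ∈ redF R n ↔ (0 ≤ x ∧ x ≤ (n:ℤ)) ∧ x ∈ R := by
  classical
  simp [redF, Finset.mem_filter, Finset.mem_Icc, and_assoc]

theorem redF_mono {R : Set ℤ} {a b : ℕ} (h : a ≤ b) : redF R a ⊆ redF R b := by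
  intro x hx
  rw [mem_redF] at hx ⊢
  have : (a:ℤ) ≤ (b:ℤ) := by exact_mod_cast h
  exact ⟨⟨hx.1.1, le_trans hx.1.2 this⟩, hx.2⟩

def stepf (k : ℕ) (s : ℕ) : ℕ := s + max 1 (s / k)

theorem stepf_ge_one (k y : ℕ) : y + 1 ≤ stepf k y := by
  unfold stepf
  have := le_max_left 1 (y / k)
  omega

theorem stepf_ge_div (k y : ℕ) : y + y / k ≤ stepf k y := by
  unfold stepf
  have := le_max_right 1 (y / k)
  omega

theorem stepf_iter_ge (k : ℕ) (s n : ℕ) : s + n ≤ (stepf k)^[n] s := by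
  induction n with
  | zero => simp
  | succ n ih =>
    rw [Function.iterate_succ_apply']
    have := stepf_ge_one k ((stepf k)^[n] s)
    omega

theorem stepf_iter_lower (k : ℕ) (s n : ℕ) : s + n * (s / k) ≤ (stepf k)^[n] s := by
  induction n with
  | zero => simp
  | succ n ih =>
    rw [Function.iterate_succ_apply']
    have hge : s ≤ (stepf k)^[n] s := by
      have := stepf_iter_ge k s n
      omega
    have hdiv : s / k ≤ ((stepf k)^[n] s) / k := Nat.div_le_div_right hge
    have hst : (stepf k)^[n] s + s / k ≤ stepf k ((stepf k)^[n] s) := by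
      have := stepf_ge_div k ((stepf k)^[n] s)
      omega
    calc s + (n+1) * (s / k) = (s + n * (s/k)) + s / k := by ring
      _ ≤ (stepf k)^[n] s + s / k := by omega
      _ ≤ stepf k ((stepf k)^[n] s) := hst

theorem stepf_double (k : ℕ) (hk : 0 < k) (s : ℕ) : 2 * s ≤ (stepf k)^[3*k] s := by
  by_cases hs : s ≤ 3 * k
  · have := stepf_iter_ge k s (3*k)
    omega
  · have hlow := stepf_iter_lower k s (3*k)
    have hmod := Nat.div_add_mod s k
    have hmodlt : s % k < k := Nat.mod_lt _ hk
    have hassoc : (3*k) * (s / k) = 3 * (k * (s / k)) := by ring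
    rw [hassoc] at hlow
    set u := k * (s / k) with hu
    omega

theorem stepf_iter_double (k : ℕ) (hk : 0 < k) (D : ℕ) :
    ∀ j : ℕ, 2^j * D ≤ (stepf k)^[3*k*j] D := by
  intro j
  induction j with
  | zero => simp
  | succ j ih =>
    have hidx : 3*k*(j+1) = 3*k + 3*k*j := by ring
    rw [hidx, Function.iterate_add_apply]
    have h2 := stepf_double k hk ((stepf k)^[3*k*j] D)
    calc 2^(j+1) * D = 2 * (2^j * D) := by ring
      _ ≤ 2 * ((stepf k)^[3*k*j] D) := by omega
      _ ≤ (stepf k)^[3*k] ((stepf k)^[3*k*j] D) := h2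

theorem window {R : Set ℤ} {k : ℕ} (hk : 0 < k) (hAP : ¬ HasAPZ R 2 k) (t : ℕ) :
    (redF R (stepf k t)).card ≤ (k+1) * (redF R t).card + 1 := by
  classical
  have hexpand : (k+1) * (redF R t).card = k * (redF R t).card + (redF R t).card := by ring
  set w : ℕ := max 1 (t / k) with hw
  have hw1 : 1 ≤ w := le_max_left _ _
  set A : Finset ℤ := (Finset.Ioc (t:ℤ) ((t:ℤ)+(w:ℤ))).filter (fun x => x ∈ R) with hA
  have hmemA : ∀ x : ℤ, x ∈ A ↔ ((t:ℤ) < x ∧ x ≤ (t:ℤ)+(w:ℤ)) ∧ x ∈ R := by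
    intro x; simp [hA, Finset.mem_filter, Finset.mem_Ioc]
  have hsplit : (redF R (stepf k t)).card ≤ (redF R t).card + A.card := by
    have hsub : redF R (stepf k t) ⊆ redF R t ∪ A := by
      intro x hx
      rw [mem_redF] at hx
      have hcast : ((stepf k t : ℕ) : ℤ) = (t:ℤ) + (w:ℤ) := by
        simp only [stepf, ← hw]
        push_cast
        ring
      have hx2 : x ≤ (t:ℤ) + (w:ℤ) := by
        rw [hcast] at hx
        exact hx.1.2
      rcases le_or_gt x (t:ℤ) with h | h
      · exact Finset.mem_union_left _ (by rw [mem_redF]; exact ⟨⟨hx.1.1, h⟩, hx.2⟩)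
      · exact Finset.mem_union_right _ (by rw [hmemA]; exact ⟨⟨h, hx2⟩, hx.2⟩)
    calc (redF R (stepf k t)).card ≤ (redF R t ∪ A).card := Finset.card_le_card hsub
      _ ≤ (redF R t).card + A.card := Finset.card_union_le _ _
  rcases A.eq_empty_or_nonempty with hA0 | hA0
  · rw [hA0] at hsplit
    simp only [Finset.card_empty, add_zero] at hsplit
    omega
  obtain ⟨x₀, hx₀A, hx₀min⟩ := A.exists_min_image id hA0
  simp only [id] at hx₀min
  have hcardA : A.card ≤ k * (redF R t).card + 1 := by
    by_cases hdiv : t / k ≤ 1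
    · -- w = 1, A ⊆ {t+1}
      have hw1' : w = 1 := by omega
      have hsub1 : A ⊆ {(t:ℤ)+1} := by
        intro x hx
        rw [hmemA] at hx
        rw [Finset.mem_singleton]
        omega
      have := Finset.card_le_card hsub1
      simp only [Finset.card_singleton] at this
      omega
    · -- w = t / k ≥ 2
      have hwdiv : w = t / k := by omega
      have hkwn : k * w ≤ t := by
        rw [hwdiv, Nat.mul_comm]
        exact Nat.div_mul_le_self t k
      have hkw : (k:ℤ) * (w:ℤ) ≤ (t:ℤ) := by exact_mod_cast hkwn
      have hkey : (A.erase x₀).card ≤ ((Finset.Icc 1 k) ×ˢ (redF R t)).card := by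
        have hsubimg : A.erase x₀ ⊆
            ((Finset.Icc 1 k) ×ˢ (redF R t)).image
              (fun p : ℕ × ℤ => x₀ + (x₀ - p.2) / (p.1 : ℤ)) := by
          intro x hx
          have hxA : x ∈ A := Finset.mem_of_mem_erase hx
          have hxgt : x₀ < x :=
            lt_of_le_of_ne (hx₀min x hxA) (Ne.symm (Finset.ne_of_mem_erase hx))
          have hxmem := (hmemA x).mp hxA
          have hx₀mem := (hmemA x₀).mp hx₀A
          obtain ⟨j, hj1, hjk, hwitR⟩ := lemB hAP hx₀mem.2 hxmem.2 hxgt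
          have hjb1 : (1:ℤ) ≤ (j:ℤ) := by exact_mod_cast hj1
          have hjb2 : (j:ℤ) ≤ (k:ℤ) := by exact_mod_cast hjk
          have hxd1 : 1 ≤ x - x₀ := by omega
          have hxd2 : x - x₀ ≤ (w:ℤ) - 1 := by
            have := hxmem.1.2
            omega
          have hprod1 : (1:ℤ) ≤ (j:ℤ) * (x - x₀) := by nlinarith
          have hprod2 : (j:ℤ) * (x - x₀) ≤ (t:ℤ) - (k:ℤ) := by
            have h1 : (j:ℤ) * (x - x₀) ≤ (k:ℤ) * (x - x₀) := by nlinarith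
            have h2 : (k:ℤ) * (x - x₀) ≤ (k:ℤ) * ((w:ℤ) - 1) := by nlinarith
            nlinarith
          have hwit0 : 0 ≤ x₀ - (j:ℤ) * (x - x₀) := by
            have ht0 : (t:ℤ) < x₀ := hx₀mem.1.1
            have hk' : (1:ℤ) ≤ (k:ℤ) := by exact_mod_cast hk
            omega
          have hwitt : x₀ - (j:ℤ) * (x - x₀) ≤ (t:ℤ) := by
            by_contra hcon
            push_neg at hcon
            have hwitA : x₀ - (j:ℤ) * (x - x₀) ∈ A := by
              rw [hmemA]
              exact ⟨⟨hcon, by omega⟩, hwitR⟩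
            have := hx₀min _ hwitA
            omega
          rw [Finset.mem_image]
          refine ⟨(j, x₀ - (j:ℤ) * (x - x₀)), ?_, ?_⟩
          · rw [Finset.mem_product]
            exact ⟨Finset.mem_Icc.mpr ⟨hj1, hjk⟩,
              mem_redF.mpr ⟨⟨hwit0, hwitt⟩, hwitR⟩⟩
          · show x₀ + (x₀ - (x₀ - (j:ℤ) * (x - x₀))) / (j:ℤ) = x
            have hjne : (j:ℤ) ≠ 0 := by omega
            have : x₀ - (x₀ - (j:ℤ) * (x - x₀)) = (j:ℤ) * (x - x₀) := by ring
            rw [this, Int.mul_ediv_cancel_left _ hjne]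
            ring
        calc (A.erase x₀).card
            ≤ (((Finset.Icc 1 k) ×ˢ (redF R t)).image
                (fun p : ℕ × ℤ => x₀ + (x₀ - p.2) / (p.1 : ℤ))).card :=
              Finset.card_le_card hsubimg
          _ ≤ ((Finset.Icc 1 k) ×ˢ (redF R t)).card := Finset.card_image_le
      have hcard_prod : ((Finset.Icc 1 k) ×ˢ (redF R t)).card = k * (redF R t).card := by
        rw [Finset.card_product, Nat.card_Icc]
        have hkk : k + 1 - 1 = k := by omega
        rw [hkk]
      have herase : (A.erase x₀).card = A.card - 1 := Finset.card_erase_of_mem hx₀A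
      have hAne : 1 ≤ A.card := Finset.card_pos.mpr hA0
      omega
  omega

/-- For all positive integers k and m there is C = C(m,k) such that for
every colouring of ℤ with no (2,k)-AP and every d ≥ 1 with [0, d] a gap, the number of
red integers in [0, m·d] is at most C. -/
theorem statement8 (k m : ℕ) (hk : 0 < k) (hm : 0 < m) :
    ∃ C : ℕ, ∀ R : Set ℤ, ¬ HasAPZ R 2 k →
      ∀ d : ℤ, 1 ≤ d → IsGap R 0 d →
        (Set.Icc (0 : ℤ) ((m : ℤ) * d) ∩ R).ncard ≤ C := by
  refine ⟨(k+2)^(3*k*m+1), ?_⟩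
  intro R hAP d hd hGap
  set D : ℕ := d.toNat with hD
  have hdn : (D:ℤ) = d := Int.toNat_of_nonneg (by omega)
  have hD1 : 1 ≤ D := by omega
  -- base: at most two reds in [0, d]
  have hbase : (redF R D).card ≤ 2 := by
    have hsub : redF R D ⊆ {(0:ℤ), d} := by
      intro x hx
      rw [mem_redF] at hx
      rw [hdn] at hx
      obtain ⟨⟨h0, h1⟩, hR⟩ := hx
      rcases eq_or_lt_of_le h0 with h | h
      · simp [← h]
      rcases eq_or_lt_of_le h1 with h' | h'
      · simp [h']
      · exact absurd hR (hGap.2.2.2 x h h')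
    calc (redF R D).card ≤ ({(0:ℤ), d} : Finset ℤ).card := Finset.card_le_card hsub
      _ ≤ 2 := by
          apply le_trans (Finset.card_insert_le _ _)
          simp
  -- induction: count along the iteration
  have hcount : ∀ r : ℕ, (redF R ((stepf k)^[r] D)).card ≤ (k+2)^(r+1) := by
    intro r
    induction r with
    | zero =>
      simpa using le_trans hbase (by rw [pow_one]; omega : 2 ≤ (k+2)^1)
    | succ r ih =>
      rw [Function.iterate_succ_apply']
      have hwin := window hk hAP ((stepf k)^[r] D)
      have hp1 : 1 ≤ (k+2)^(r+1) := Nat.one_le_pow _ _ (by omega)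
      have hpow : (k+2)^(r+1+1) = (k+2) * (k+2)^(r+1) := by ring
      have : (k+1) * (redF R ((stepf k)^[r] D)).card + 1 ≤ (k+2) * (k+2)^(r+1) := by
        have h1 : (k+1) * (redF R ((stepf k)^[r] D)).card ≤ (k+1) * (k+2)^(r+1) :=
          Nat.mul_le_mul_left _ ih
        have h2 : (k+2) * (k+2)^(r+1) = (k+1) * (k+2)^(r+1) + (k+2)^(r+1) := by ring
        omega
      rw [hpow]
      omega
  -- m * D ≤ iterate (3*k*m)
  have hgrow : m * D ≤ (stepf k)^[3*k*m] D := by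
    have h2 := stepf_iter_double k hk D m
    have hm2 : m ≤ 2^m := Nat.le_of_lt (Nat.lt_two_pow_self (n := m))
    have : m * D ≤ 2^m * D := Nat.mul_le_mul_right _ hm2
    omega
  -- convert the goal set to redF R (m*D)
  have hsetEq : Set.Icc (0 : ℤ) ((m : ℤ) * d) ∩ R = ↑(redF R (m*D)) := by
    ext x
    simp only [Set.mem_inter_iff, Set.mem_Icc, Finset.coe_sort_coe, Finset.mem_coe]
    rw [mem_redF]
    have : ((m*D : ℕ) : ℤ) = (m:ℤ) * d := by push_cast [hdn]; ring
    rw [this]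
  rw [hsetEq, Set.ncard_coe_finset]
  calc (redF R (m*D)).card ≤ (redF R ((stepf k)^[3*k*m] D)).card :=
        Finset.card_le_card (redF_mono hgrow)
    _ ≤ (k+2)^(3*k*m+1) := hcount (3*k*m)
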